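/- Let (X, d) be a finite quasihypermetric space that is not strictly quasihypermetric. Then M(X) < ∞ if and only if there is no signed measure μ of total mass 0 and constant c ≠ 0 with d_μ(x) = c for all x ∈ X. -/

import Mathlib

open Finset
open scoped RealInnerProductSpace

section Aux
variable {E : Type*} [NormedAddCommGroup E] [InnerProductSpace ℝ E] [FiniteDimensional ℝ E]

lemma aux_surj (T : E →ₗ[ℝ] E) (hT : ∀ x y : E, ⟪T x, y⟫ = ⟪x, T y⟫) (ℓ : E)
    (hℓ : ∀ x, T x = 0 → ⟪ℓ, x⟫ = 0) : ∃ v, T v = ℓ := by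
  have hle : LinearMap.range T ≤ (LinearMap.ker T)ᗮ := by
    rintro _ ⟨x, rfl⟩ k hk
    rw [LinearMap.mem_ker] at hk
    rw [real_inner_comm, hT, hk, inner_zero_right]
  have heq : LinearMap.range T = (LinearMap.ker T)ᗮ := by
    apply Submodule.eq_of_le_of_finrank_eq hle
    have h1 := LinearMap.finrank_range_add_finrank_ker T
    have h2 := Submodule.finrank_add_finrank_orthogonal (K := LinearMap.ker T)
    omega
  have hmem : ℓ ∈ (LinearMap.ker T)ᗮ := by
    intro k hk
    rw [LinearMap.mem_ker] at hk
    rw [real_inner_comm]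
    exact hℓ k hk
  rw [← heq] at hmem
  exact hmem

omit [FiniteDimensional ℝ E] in
lemma aux_bound (T : E →ₗ[ℝ] E) (hT : ∀ x y : E, ⟪T x, y⟫ = ⟪x, T y⟫)
    (hpsd : ∀ x, 0 ≤ ⟪T x, x⟫) (v x : E) :
    2 * ⟪T v, x⟫ - ⟪T x, x⟫ ≤ ⟪T v, v⟫ := by
  have h := hpsd (x - v)
  have hc : ⟪T x, v⟫ = ⟪T v, x⟫ := by rw [hT, real_inner_comm]
  rw [map_sub, inner_sub_left, inner_sub_right, inner_sub_right] at h
  linarith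
end Aux

noncomputable def distMap (X : Type*) [Fintype X] [MetricSpace X] :
    EuclideanSpace ℝ X →ₗ[ℝ] EuclideanSpace ℝ X where
  toFun x := WithLp.toLp 2 (fun i => ∑ j, dist i j * x j)
  map_add' x y := PiLp.ext fun i => by
    simp [PiLp.add_apply, mul_add, Finset.sum_add_distrib]
  map_smul' c x := PiLp.ext fun i => by
    simp only [PiLp.smul_apply, smul_eq_mul, RingHom.id_apply, Finset.mul_sum]
    exact Finset.sum_congr rfl fun j _ => by ring

noncomputable def meanProj (X : Type*) [Fintype X] :
    EuclideanSpace ℝ X →ₗ[ℝ] EuclideanSpace ℝ X where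
  toFun x := WithLp.toLp 2 (fun i => x i - (∑ j, x j) / (Fintype.card X : ℝ))
  map_add' x y := PiLp.ext fun i => by
    simp [PiLp.add_apply, Finset.sum_add_distrib, add_div]
    ring
  map_smul' c x := PiLp.ext fun i => by
    simp only [PiLp.smul_apply, smul_eq_mul, RingHom.id_apply, ← Finset.mul_sum, mul_div_assoc]
    ring

lemma inner_eq' {X : Type*} [Fintype X] (x y : EuclideanSpace ℝ X) :
    ⟪x, y⟫ = ∑ i, x i * y i := by
  simp [PiLp.inner_apply, RCLike.inner_apply, conj_trivial, mul_comm]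

theorem stmt17 {X : Type*} [Fintype X] [Nonempty X] [MetricSpace X]
    (hq : ∀ α : X → ℝ, ∑ i, α i = 0 → ∑ i, ∑ j, α i * α j * dist i j ≤ 0)
    (hns : ∃ α : X → ℝ, α ≠ 0 ∧ ∑ i, α i = 0 ∧ ∑ i, ∑ j, α i * α j * dist i j = 0) :
    BddAbove {r : ℝ | ∃ μ : X → ℝ, ∑ i, μ i = 1 ∧
        ∑ i, ∑ j, μ i * μ j * dist i j = r} ↔
      ¬ ∃ (μ : X → ℝ) (c : ℝ), ∑ i, μ i = 0 ∧ c ≠ 0 ∧ ∀ x, ∑ y, dist x y * μ y = c := by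
  classical
  clear hns
  have hn : 0 < (Fintype.card X : ℝ) := by
    exact_mod_cast Fintype.card_pos
  set n : ℝ := (Fintype.card X : ℝ) with hn_def
  set A := distMap X with hA_def
  set P := meanProj X with hP_def
  have hAapp : ∀ (x : EuclideanSpace ℝ X) (i : X), A x i = ∑ j, dist i j * x j :=
    fun _ _ => rfl
  have hPapp : ∀ (x : EuclideanSpace ℝ X) (i : X), P x i = x i - (∑ j, x j) / n :=
    fun _ _ => rfl
  have hIform : ∀ x y : EuclideanSpace ℝ X, ⟪x, A y⟫ = ∑ i, ∑ j, x i * y j * dist i j := by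
    intro x y
    rw [inner_eq']
    refine Finset.sum_congr rfl fun i _ => ?_
    rw [hAapp, Finset.mul_sum]
    exact Finset.sum_congr rfl fun j _ => by ring
  have hAsym : ∀ x y : EuclideanSpace ℝ X, ⟪A x, y⟫ = ⟪x, A y⟫ := by
    intro x y
    rw [real_inner_comm, hIform, hIform, Finset.sum_comm]
    exact Finset.sum_congr rfl fun i _ => Finset.sum_congr rfl fun j _ => by
      rw [dist_comm]; ring
  have hPsym : ∀ x y : EuclideanSpace ℝ X, ⟪P x, y⟫ = ⟪x, P y⟫ := by
    intro x y
    rw [inner_eq', inner_eq']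
    simp only [hPapp, sub_mul, mul_sub, Finset.sum_sub_distrib]
    congr 1
    rw [← Finset.mul_sum, ← Finset.sum_mul]
    ring
  have hPmass : ∀ x : EuclideanSpace ℝ X, ∑ i, P x i = 0 := by
    intro x
    have hn' : n ≠ 0 := hn.ne'
    simp only [hPapp, Finset.sum_sub_distrib, Finset.sum_const, nsmul_eq_mul, ← hn_def]
    field_simp
    simp [hn_def]
  have hPfix : ∀ x : EuclideanSpace ℝ X, ∑ i, x i = 0 → P x = x := by
    intro x hx
    ext i
    rw [hPapp, hx, zero_div, sub_zero]
  have hQ : ∀ x : EuclideanSpace ℝ X, ∑ i, x i = 0 → ⟪x, A x⟫ ≤ 0 := by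
    intro x hx
    rw [hIform]
    exact hq x hx
  set T : EuclideanSpace ℝ X →ₗ[ℝ] EuclideanSpace ℝ X := -(P ∘ₗ A ∘ₗ P) with hT_def
  have hTapp : ∀ x : EuclideanSpace ℝ X, T x = -(P (A (P x))) := fun x => rfl
  have hTsym : ∀ x y : EuclideanSpace ℝ X, ⟪T x, y⟫ = ⟪x, T y⟫ := by
    intro x y
    rw [hTapp x, hTapp y, inner_neg_left, inner_neg_right,
      hPsym (A (P x)) y, hAsym (P x) (P y), hPsym x (A (P y))]
  have hTquad : ∀ x : EuclideanSpace ℝ X, ⟪T x, x⟫ = -⟪P x, A (P x)⟫ := by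
    intro x
    rw [hTapp, inner_neg_left, hPsym (A (P x)) x, real_inner_comm]
  have hTpsd : ∀ x : EuclideanSpace ℝ X, 0 ≤ ⟪T x, x⟫ := by
    intro x
    rw [hTquad]
    have := hQ (P x) (hPmass x)
    linarith
  constructor
  · -- bounded → no nonzero constant potential
    rintro ⟨b, hb⟩ ⟨μ, c, hm0, hc0, hdc⟩
    set σ0 : X → ℝ := fun _ => n⁻¹ with hσ0
    have hσmass : ∑ i, σ0 i = 1 := by
      simp only [hσ0, Finset.sum_const, nsmul_eq_mul, ← hn_def]
      field_simp
      simp [hn_def]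
    set Iσ : ℝ := ∑ i, ∑ j, σ0 i * σ0 j * dist i j with hIσ
    have hS2 : ∑ i, ∑ j, σ0 i * μ j * dist i j = c := by
      have : ∀ i, ∑ j, σ0 i * μ j * dist i j = σ0 i * c := by
        intro i
        rw [← hdc i, Finset.mul_sum]
        exact Finset.sum_congr rfl fun j _ => by ring
      simp only [this, ← Finset.sum_mul, hσmass, one_mul]
    have hS3 : ∑ i, ∑ j, μ i * σ0 j * dist i j = c := by
      rw [Finset.sum_comm]
      have : ∀ j, ∑ i, μ i * σ0 j * dist i j = σ0 j * c := by
        intro j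
        rw [← hdc j, Finset.mul_sum]
        exact Finset.sum_congr rfl fun i _ => by rw [dist_comm]; ring
      simp only [this, ← Finset.sum_mul, hσmass, one_mul]
    have hS4 : ∑ i, ∑ j, μ i * μ j * dist i j = 0 := by
      have : ∀ i, ∑ j, μ i * μ j * dist i j = μ i * c := by
        intro i
        rw [← hdc i, Finset.mul_sum]
        exact Finset.sum_congr rfl fun j _ => by ring
      simp only [this, ← Finset.sum_mul, hm0, zero_mul]
    have key : ∀ t : ℝ, (Iσ + 2 * (t * c)) ∈ {r : ℝ | ∃ μ : X → ℝ, ∑ i, μ i = 1 ∧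
        ∑ i, ∑ j, μ i * μ j * dist i j = r} := by
      intro t
      refine ⟨fun i => σ0 i + t * μ i, ?_, ?_⟩
      · rw [Finset.sum_add_distrib, hσmass, ← Finset.mul_sum, hm0, mul_zero, add_zero]
      · have perij : ∀ i j : X, (σ0 i + t * μ i) * (σ0 j + t * μ j) * dist i j
            = σ0 i * σ0 j * dist i j + t * (σ0 i * μ j * dist i j)
              + t * (μ i * σ0 j * dist i j) + (t * t) * (μ i * μ j * dist i j) :=
          fun i j => by ring
        simp only [perij, Finset.sum_add_distrib, ← Finset.mul_sum]
        rw [hS2, hS3, hS4, ← hIσ]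
        ring
    have := hb (key ((b + 1 - Iσ) / (2 * c)))
    have heq : Iσ + 2 * ((b + 1 - Iσ) / (2 * c) * c) = b + 1 := by
      field_simp
      ring
    rw [heq] at this
    linarith
  · -- no nonzero constant potential → bounded
    intro H
    set σ : EuclideanSpace ℝ X := WithLp.toLp 2 (fun _ => n⁻¹ : X → ℝ) with hσ_def
    have hσmass : ∑ i, σ i = 1 := by
      simp only [hσ_def, Finset.sum_const, nsmul_eq_mul, ← hn_def]
      field_simp
      simp [hn_def]
    have hker : ∀ x : EuclideanSpace ℝ X, T x = 0 → ⟪P (A σ), x⟫ = 0 := by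
      intro x hx
      have h0 : ⟪P x, A (P x)⟫ = 0 := by
        have h1 := hTquad x
        rw [hx, inner_zero_left] at h1
        linarith
      have horth : ∀ β : EuclideanSpace ℝ X, ∑ i, β i = 0 → ⟪A (P x), β⟫ = 0 := by
        intro β hβ
        by_contra hbne
        set bb : ℝ := ⟪A (P x), β⟫ with hbb
        set qq : ℝ := ⟪β, A β⟫ with hqq
        have hq2 : qq ≤ 0 := hQ β hβ
        have h1q : 0 < 1 - qq := by linarith
        set t : ℝ := bb / (1 - qq) with ht
        have htu : t * (1 - qq) = bb := div_mul_cancel₀ bb h1q.ne'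
        have hmass2 : ∑ i, (P x + t • β) i = 0 := by
          simp only [PiLp.add_apply, PiLp.smul_apply, smul_eq_mul,
            Finset.sum_add_distrib, ← Finset.mul_sum, hPmass, hβ, mul_zero, add_zero]
        have hexp : ⟪P x + t • β, A (P x + t • β)⟫
            = ⟪P x, A (P x)⟫ + 2 * t * bb + t ^ 2 * qq := by
          rw [map_add, map_smul, inner_add_left, inner_add_right, inner_add_right,
            real_inner_smul_left, real_inner_smul_left, real_inner_smul_right,
            real_inner_smul_right, ← hAsym (P x) β, real_inner_comm (A (P x)) β,
            ← hbb, ← hqq]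
          ring
        have hle := hQ _ hmass2
        rw [hexp, h0, zero_add] at hle
        have hb2 : 0 < bb * bb := mul_self_pos.mpr hbne
        have h6 := mul_le_mul_of_nonneg_right hle (le_of_lt (mul_pos h1q h1q))
        rw [zero_mul] at h6
        have h7 : (2 * t * bb + t ^ 2 * qq) * ((1 - qq) * (1 - qq))
            = 2 * bb * ((t * (1 - qq)) * (1 - qq)) * 1
              + qq * ((t * (1 - qq)) * (t * (1 - qq))) := by ring
        rw [h7, htu] at h6
        nlinarith [mul_nonneg (le_of_lt hb2) (neg_nonneg.mpr hq2)]
      obtain ⟨i₀⟩ := ‹Nonempty X›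
      have hconst : ∀ i, A (P x) i = A (P x) i₀ := by
        intro i
        set β : EuclideanSpace ℝ X :=
          WithLp.toLp 2 (fun k => (if k = i then (1:ℝ) else 0) - if k = i₀ then 1 else 0 : X → ℝ) with hβ_def
        have hβm : ∑ k, β k = 0 := by
          simp [hβ_def, Finset.sum_sub_distrib]
        have h8 := horth β hβm
        rw [inner_eq'] at h8
        simp only [hβ_def, mul_sub, mul_ite, mul_one, mul_zero,
          Finset.sum_sub_distrib, Finset.sum_ite_eq', Finset.mem_univ, if_true] at h8
        linarith
      have hcc : A (P x) i₀ = 0 := by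
        by_contra hne
        exact H ⟨P x, A (P x) i₀, hPmass x, hne, fun z => hconst z⟩
      have hA0 : A (P x) = 0 := by
        ext i
        rw [hconst i, hcc]
        rfl
      calc ⟪P (A σ), x⟫ = ⟪A σ, P x⟫ := hPsym (A σ) x
        _ = ⟪σ, A (P x)⟫ := hAsym σ (P x)
        _ = 0 := by rw [hA0, inner_zero_right]
    obtain ⟨v, hv⟩ := aux_surj T hTsym (P (A σ)) hker
    refine ⟨⟪σ, A σ⟫ + ⟪T v, v⟫, ?_⟩
    rintro r ⟨μ, hm1, hIr⟩
    set μ' : EuclideanSpace ℝ X := WithLp.toLp 2 μ with hμ'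
    set x : EuclideanSpace ℝ X := WithLp.toLp 2 (fun i => μ i - σ i : X → ℝ) with hx_def
    have hxm : ∑ i, x i = 0 := by
      simp only [hx_def, Finset.sum_sub_distrib, hm1, hσmass, sub_self]
    have hPx : P x = x := hPfix x hxm
    have hsplit : μ' = σ + x := by
      ext i
      show μ i = σ i + (μ i - σ i)
      ring
    have hr : r = ⟪μ', A μ'⟫ := by
      rw [hIform]
      exact hIr.symm
    have hAσx : ⟪σ, A x⟫ = ⟪T v, x⟫ := by
      calc ⟪σ, A x⟫ = ⟪A σ, x⟫ := (hAsym σ x).symm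
        _ = ⟪A σ, P x⟫ := by rw [hPx]
        _ = ⟪P (A σ), x⟫ := (hPsym (A σ) x).symm
        _ = ⟪T v, x⟫ := by rw [hv]
    have hxAx : ⟪x, A x⟫ = -⟪T x, x⟫ := by
      have h9 := hTquad x
      rw [hPx] at h9
      linarith
    have hexp2 : ⟪σ + x, A (σ + x)⟫ = ⟪σ, A σ⟫ + 2 * ⟪T v, x⟫ - ⟪T x, x⟫ := by
      rw [map_add, inner_add_left, inner_add_right, inner_add_right,
        ← real_inner_comm x (A σ), hAsym σ x, hAσx, hxAx]
      ring
    have hfinal := aux_bound T hTsym hTpsd v x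
    rw [hr, hsplit, hexp2]
    linarith
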